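/- arXiv:2103.02210 — 6 statements merged into one kernel-verified Lean document; each statement's English description precedes it below -/
import Mathlib

section
/- Vertex-to-edge summation by parts: for f ∈ V⁰_{x×y} (a vertex-centered function vanishing at all boundary vertices) and u ∈ E^{ew}_{x×ȳ}, one has ⟨f, A_y u⟩_{vc} = [a_y f, u]_{ew} and ⟨f, D_y u⟩_{vc} + [d_y f, u]_{ew} = 0. -/
open Finset

noncomputable section

/-! Staggered-grid finite-difference operators on a uniform `N_x × N_y` mesh with spacings
`h_x, h_y`.  Grid functions are modelled as `ℤ → ℤ → ℝ`.  For cell-centered functions the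
index `(i,j)` denotes the cell center `(x_i, y_j)`; for east–west edge functions the first
index `i` denotes the edge abscissa `x_{i+1/2}`; for north–south edge functions the second
index `j` denotes the edge ordinate `y_{j+1/2}`; vertex functions use both conventions. -/

/-- Edge-to-center average in `x`: `(a_x w)_{i,j} = (w_{i+1/2,j} + w_{i-1/2,j})/2`. -/
def axOp (w : ℤ → ℤ → ℝ) : ℤ → ℤ → ℝ := fun i j => (w i j + w (i - 1) j) / 2

/-- Edge-to-center difference in `x`: `(d_x w)_{i,j} = (w_{i+1/2,j} − w_{i-1/2,j})/h_x`. -/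
def dxOp (hx : ℝ) (w : ℤ → ℤ → ℝ) : ℤ → ℤ → ℝ := fun i j => (w i j - w (i - 1) j) / hx

/-- Center-to-edge average in `x`: `(A_x φ)_{i+1/2,j} = (φ_{i+1,j} + φ_{i,j})/2`. -/
def AxOp (φ : ℤ → ℤ → ℝ) : ℤ → ℤ → ℝ := fun i j => (φ (i + 1) j + φ i j) / 2

/-- Center-to-edge difference in `x`: `(D_x φ)_{i+1/2,j} = (φ_{i+1,j} − φ_{i,j})/h_x`. -/
def DxOp (hx : ℝ) (φ : ℤ → ℤ → ℝ) : ℤ → ℤ → ℝ := fun i j => (φ (i + 1) j - φ i j) / hx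

/-- Edge-to-center average in `y`. -/
def ayOp (w : ℤ → ℤ → ℝ) : ℤ → ℤ → ℝ := fun i j => (w i j + w i (j - 1)) / 2

/-- Edge-to-center difference in `y`. -/
def dyOp (hy : ℝ) (w : ℤ → ℤ → ℝ) : ℤ → ℤ → ℝ := fun i j => (w i j - w i (j - 1)) / hy

/-- Center-to-edge average in `y`. -/
def AyOp (φ : ℤ → ℤ → ℝ) : ℤ → ℤ → ℝ := fun i j => (φ i (j + 1) + φ i j) / 2

/-- Center-to-edge difference in `y`. -/
def DyOp (hy : ℝ) (φ : ℤ → ℤ → ℝ) : ℤ → ℤ → ℝ := fun i j => (φ i (j + 1) - φ i j) / hy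

/-- The discrete cell-centered inner product
`(φ,ψ)₂ = h_x h_y ∑_{i=1}^{N_x} ∑_{j=1}^{N_y} φ_{i,j} ψ_{i,j}`. -/
def ip2 (Nx Ny : ℕ) (hx hy : ℝ) (f g : ℤ → ℤ → ℝ) : ℝ :=
  hx * hy * ∑ i ∈ Icc (1 : ℤ) (Nx : ℤ), ∑ j ∈ Icc (1 : ℤ) (Ny : ℤ), f i j * g i j

/-- The east–west edge inner product `[u,r]_{ew} = (a_x(u r), 1)₂`. -/
def ipew (Nx Ny : ℕ) (hx hy : ℝ) (f g : ℤ → ℤ → ℝ) : ℝ :=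
  ip2 Nx Ny hx hy (axOp (f * g)) 1

/-- The north–south edge inner product `[v,w]_{ns} = (a_y(v w), 1)₂`. -/
def ipns (Nx Ny : ℕ) (hx hy : ℝ) (f g : ℤ → ℤ → ℝ) : ℝ :=
  ip2 Nx Ny hx hy (ayOp (f * g)) 1

/-- The vertex inner product `⟨f,g⟩_{vc} = (a_x(a_y(f g)), 1)₂`. -/
def ipvc (Nx Ny : ℕ) (hx hy : ℝ) (f g : ℤ → ℤ → ℝ) : ℝ :=
  ip2 Nx Ny hx hy (axOp (ayOp (f * g))) 1

lemma tele (N : ℕ) (g : ℤ → ℝ) :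
    ∑ j ∈ Icc (1 : ℤ) (N : ℤ), (g j - g (j - 1)) = g N - g 0 := by
  induction N with
  | zero => simp
  | succ n ih =>
    have h : ((n + 1 : ℕ) : ℤ) = (n : ℤ) + 1 := by push_cast; ring
    have hins : Icc (1 : ℤ) ((n : ℤ) + 1) = insert ((n : ℤ) + 1) (Icc (1 : ℤ) (n : ℤ)) := by
      ext x; simp only [Finset.mem_Icc, Finset.mem_insert]; omega
    have hnm : ((n : ℤ) + 1) ∉ Icc (1 : ℤ) (n : ℤ) := by
      simp only [Finset.mem_Icc]; omega
    rw [h, hins, Finset.sum_insert hnm, ih,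
      show (n : ℤ) + 1 - 1 = (n : ℤ) by ring]
    ring

/-- Vertex-to-edge summation by parts: for a vertex-centered function `f ∈ V⁰_{x×y}`
vanishing at all boundary vertices (vertex `(i,j)` denotes `(x_{i+1/2}, y_{j+1/2})`, so the
boundary vertices are those with `i ∈ {0, N_x}` or `j ∈ {0, N_y}`) and an east–west
edge-centered function `u`, one has `⟨f, A_y u⟩_{vc} = [a_y f, u]_{ew}` and
`⟨f, D_y u⟩_{vc} + [d_y f, u]_{ew} = 0`. -/
theorem stmt5 (Nx Ny : ℕ) (hx hy : ℝ) (hhx : 0 < hx) (hhy : 0 < hy)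
    (f u : ℤ → ℤ → ℝ)
    (hfW : ∀ j, f 0 j = 0) (hfE : ∀ j, f (Nx : ℤ) j = 0)
    (hfS : ∀ i, f i 0 = 0) (hfN : ∀ i, f i (Ny : ℤ) = 0) :
    ipvc Nx Ny hx hy f (AyOp u) = ipew Nx Ny hx hy (ayOp f) u ∧
      ipvc Nx Ny hx hy f (DyOp hy u) + ipew Nx Ny hx hy (dyOp hy f) u = 0 := by
  constructor
  · unfold ipvc ipew ip2
    congr 1
    apply Finset.sum_congr rfl
    intro i _
    set G : ℤ → ℝ := fun j =>
      (f i j * u i (j + 1) - f i j * u i j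
        + f (i - 1) j * u (i - 1) (j + 1) - f (i - 1) j * u (i - 1) j) / 8 with hG
    have hpt : ∀ j : ℤ,
        axOp (ayOp (f * AyOp u)) i j * (1 : ℤ → ℤ → ℝ) i j
          - axOp (ayOp f * u) i j * (1 : ℤ → ℤ → ℝ) i j = G j - G (j - 1) := by
      intro j
      simp only [axOp, ayOp, AyOp, Pi.mul_apply, Pi.one_apply, hG]
      ring
    have hsum : ∑ j ∈ Icc (1 : ℤ) (Ny : ℤ),
        (axOp (ayOp (f * AyOp u)) i j * (1 : ℤ → ℤ → ℝ) i j
          - axOp (ayOp f * u) i j * (1 : ℤ → ℤ → ℝ) i j) = 0 := by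
      rw [Finset.sum_congr rfl fun j _ => hpt j, tele Ny G]
      simp [hG, hfN, hfS]
    rw [← sub_eq_zero, ← Finset.sum_sub_distrib]
    exact hsum
  · unfold ipvc ipew ip2
    rw [← mul_add, ← Finset.sum_add_distrib]
    have : ∑ i ∈ Icc (1 : ℤ) (Nx : ℤ), (∑ j ∈ Icc (1 : ℤ) (Ny : ℤ),
        axOp (ayOp (f * DyOp hy u)) i j * (1 : ℤ → ℤ → ℝ) i j
        + ∑ j ∈ Icc (1 : ℤ) (Ny : ℤ),
        axOp (dyOp hy f * u) i j * (1 : ℤ → ℤ → ℝ) i j) = 0 := by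
      apply Finset.sum_eq_zero
      intro i _
      set H : ℤ → ℝ := fun j =>
        (f i j * (u i (j + 1) + u i j)
          + f (i - 1) j * (u (i - 1) (j + 1) + u (i - 1) j)) / (4 * hy) with hH
      have hpt : ∀ j : ℤ,
          axOp (ayOp (f * DyOp hy u)) i j * (1 : ℤ → ℤ → ℝ) i j
            + axOp (dyOp hy f * u) i j * (1 : ℤ → ℤ → ℝ) i j = H j - H (j - 1) := by
        intro j
        simp only [axOp, ayOp, DyOp, dyOp, Pi.mul_apply, Pi.one_apply, hH]
        ring
      rw [← Finset.sum_add_distrib, Finset.sum_congr rfl fun j _ => hpt j, tele Ny H]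
      simp [hH, hfN, hfS]
    rw [this, mul_zero]
end
end

section
/- Discrete skew-symmetry of the 1D convection stencil: for an edge-centered function u vanishing at the boundary edges (u ∈ E^{ew0}_{x×y}), the discrete convection term satisfies [u·D_x(a_x u) + A_x(d_x(u u)), u]_{ew} = 0. -/
open Finset

noncomputable section

lemma telescope_aux (n : ℕ) (f : ℤ → ℝ) :
    ∑ i ∈ Icc (1:ℤ) (n:ℤ), (f i - f (i-1)) = f n - f 0 := by
  induction n with
  | zero => simp
  | succ m ih =>
    have hins : Icc (1:ℤ) ((m:ℤ)+1) = insert ((m:ℤ)+1) (Icc 1 (m:ℤ)) := by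
      ext k; simp only [Finset.mem_Icc, Finset.mem_insert]; omega
    rw [show ((m+1:ℕ):ℤ) = (m:ℤ)+1 by push_cast; ring, hins,
        Finset.sum_insert (by simp), ih]
    simp only [add_sub_cancel_right]
    ring

/-- Discrete skew-symmetry of the 1D convection stencil: for an east–west edge-centered
function `u` vanishing at the boundary edges (`u_{1/2,j} = u_{N_x+1/2,j} = 0`, i.e.
`u 0 j = u Nx j = 0` in our edge-index convention), the discrete convection term satisfies
`[u·D_x(a_x u) + A_x(d_x(u u)), u]_{ew} = 0`. -/
theorem stmt6 (Nx Ny : ℕ) (hx hy : ℝ) (hhx : 0 < hx) (hhy : 0 < hy)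
    (u : ℤ → ℤ → ℝ)
    (hu0 : ∀ j, u 0 j = 0) (huN : ∀ j, u (Nx : ℤ) j = 0) :
    ipew Nx Ny hx hy (u * DxOp hx (axOp u) + AxOp (dxOp hx (u * u))) u = 0 := by
  have hx0 : hx ≠ 0 := ne_of_gt hhx
  unfold ipew ip2
  have key : ∀ j : ℤ, ∑ i ∈ Icc (1:ℤ) (Nx:ℤ),
      axOp ((u * DxOp hx (axOp u) + AxOp (dxOp hx (u * u))) * u) i j
        * (1 : ℤ → ℤ → ℝ) i j = 0 := by
    intro j
    set T : ℤ → ℝ := fun i => (u i j^2 * u (i+1) j + u i j * u (i+1) j^2)/(2*hx) with hT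
    set S : ℤ → ℝ := fun i => (T i + T (i-1)) / 2 with hS
    have hsummand : ∀ i : ℤ,
        axOp ((u * DxOp hx (axOp u) + AxOp (dxOp hx (u * u))) * u) i j
          * (1 : ℤ → ℤ → ℝ) i j = S i - S (i-1) := by
      intro i
      simp only [hS, hT, axOp, DxOp, dxOp, AxOp, Pi.mul_apply, Pi.add_apply,
        Pi.one_apply, mul_one,
        show ∀ k : ℤ, k + 1 - 1 = k from fun k => by ring,
        show ∀ k : ℤ, k - 1 + 1 = k from fun k => by ring]
      field_simp
      ring
    calc ∑ i ∈ Icc (1:ℤ) (Nx:ℤ),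
          axOp ((u * DxOp hx (axOp u) + AxOp (dxOp hx (u * u))) * u) i j
            * (1 : ℤ → ℤ → ℝ) i j
        = ∑ i ∈ Icc (1:ℤ) (Nx:ℤ), (S i - S (i-1)) := by
          exact Finset.sum_congr rfl fun i _ => hsummand i
      _ = S Nx - S 0 := telescope_aux Nx S
      _ = 0 := by
          simp only [hS, hT, hu0, huN,
            show (Nx:ℤ) - 1 + 1 = (Nx:ℤ) from by ring,
            show (0:ℤ) - 1 + 1 = 0 from by ring]
          ring
  rw [Finset.sum_comm]
  simp only [key]
  simp
end
end

section
/- The semi-discrete staggered-grid scheme for the Cahn-Hilliard-Navier-Stokes system conserves total discrete mass: if (d/dt)φ_{i,j} + d_x(A_xφ u)_{i,j} + d_y(A_yφ v)_{i,j} = d_x(M(A_xφ) D_x μ)_{i,j} + d_y(M(A_yφ) D_y μ)_{i,j} with u ∈ E^{ew0}, v ∈ E^{ns0}, and D_xμ, D_yμ vanishing at boundary edges, then (d/dt)(φ, 1)₂ = 0. -/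
open Finset

noncomputable section

lemma telescope (f : ℤ → ℝ) (N : ℕ) :
    ∑ i ∈ Icc (1:ℤ) (N:ℤ), (f i - f (i-1)) = f N - f 0 := by
  induction N with
  | zero => simp
  | succ n ih =>
    have h : ((n+1:ℕ):ℤ) = (n:ℤ) + 1 := by push_cast; ring
    have hins : Icc (1:ℤ) ((n:ℤ)+1) = insert ((n:ℤ)+1) (Icc (1:ℤ) (n:ℤ)) := by
      ext x; simp; omega
    have hnotmem : ((n:ℤ)+1) ∉ Icc (1:ℤ) (n:ℤ) := by simp
    rw [h, hins, Finset.sum_insert hnotmem, ih]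
    ring_nf

/-- The semi-discrete staggered-grid scheme for the Cahn–Hilliard–Navier–Stokes system
conserves total discrete mass: if
`(d/dt)φ_{i,j} + d_x(A_xφ u)_{i,j} + d_y(A_yφ v)_{i,j}
  = d_x(M(A_xφ) D_x μ)_{i,j} + d_y(M(A_yφ) D_y μ)_{i,j}`
on the interior cells, with `u ∈ E^{ew0}` and `v ∈ E^{ns0}` (vanishing boundary edge
values) and `D_xμ`, `D_yμ` vanishing at the boundary edges, then `(d/dt)(φ, 1)₂ = 0`. -/
theorem stmt7 (Nx Ny : ℕ) (hx hy : ℝ) (hhx : 0 < hx) (hhy : 0 < hy)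
    (φ φt u v μ : ℝ → ℤ → ℤ → ℝ) (M : ℝ → ℝ) (hM : ∀ s, 0 ≤ M s)
    (hu0 : ∀ t j, u t 0 j = 0) (huN : ∀ t j, u t (Nx : ℤ) j = 0)
    (hv0 : ∀ t i, v t i 0 = 0) (hvN : ∀ t i, v t i (Ny : ℤ) = 0)
    (hμx0 : ∀ t j, DxOp hx (μ t) 0 j = 0) (hμxN : ∀ t j, DxOp hx (μ t) (Nx : ℤ) j = 0)
    (hμy0 : ∀ t i, DyOp hy (μ t) i 0 = 0) (hμyN : ∀ t i, DyOp hy (μ t) i (Ny : ℤ) = 0)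
    (hderiv : ∀ t i j, HasDerivAt (fun s => φ s i j) (φt t i j) t)
    (hscheme : ∀ t, ∀ i ∈ Icc (1 : ℤ) (Nx : ℤ), ∀ j ∈ Icc (1 : ℤ) (Ny : ℤ),
      φt t i j + dxOp hx (AxOp (φ t) * u t) i j + dyOp hy (AyOp (φ t) * v t) i j
        = dxOp hx ((fun a b => M (AxOp (φ t) a b)) * DxOp hx (μ t)) i j
          + dyOp hy ((fun a b => M (AyOp (φ t) a b)) * DyOp hy (μ t)) i j) :
    ∀ t, HasDerivAt (fun s => ip2 Nx Ny hx hy (φ s) 1) 0 t := by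
  intro t
  set Fx : ℤ → ℤ → ℝ := fun a b =>
    M (AxOp (φ t) a b) * DxOp hx (μ t) a b - AxOp (φ t) a b * u t a b with hFx
  set Fy : ℤ → ℤ → ℝ := fun a b =>
    M (AyOp (φ t) a b) * DyOp hy (μ t) a b - AyOp (φ t) a b * v t a b with hFy
  have hphit : ∀ i ∈ Icc (1:ℤ) (Nx:ℤ), ∀ j ∈ Icc (1:ℤ) (Ny:ℤ),
      φt t i j = (Fx i j - Fx (i-1) j)/hx + (Fy i j - Fy i (j-1))/hy := by
    intro i hi j hj
    have h := hscheme t i hi j hj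
    simp only [dxOp, dyOp, Pi.mul_apply] at h
    simp only [hFx, hFy]
    field_simp at h ⊢
    linarith
  have hsum : ∑ i ∈ Icc (1:ℤ) (Nx:ℤ), ∑ j ∈ Icc (1:ℤ) (Ny:ℤ), φt t i j = 0 := by
    rw [Finset.sum_congr rfl (fun i hi => Finset.sum_congr rfl (fun j hj => hphit i hi j hj))]
    simp only [Finset.sum_add_distrib]
    have hx1 : ∀ j, ∑ i ∈ Icc (1:ℤ) (Nx:ℤ), (Fx i j - Fx (i-1) j)/hx = 0 := by
      intro j
      rw [← Finset.sum_div, telescope (fun i => Fx i j) Nx]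
      simp [hFx, huN t j, hu0 t j, hμxN t j, hμx0 t j]
    have hy1 : ∀ i, ∑ j ∈ Icc (1:ℤ) (Ny:ℤ), (Fy i j - Fy i (j-1))/hy = 0 := by
      intro i
      rw [← Finset.sum_div, telescope (fun j => Fy i j) Ny]
      simp [hFy, hvN t i, hv0 t i, hμyN t i, hμy0 t i]
    have hA : ∑ i ∈ Icc (1:ℤ) (Nx:ℤ), ∑ j ∈ Icc (1:ℤ) (Ny:ℤ), (Fx i j - Fx (i-1) j)/hx = 0 := by
      rw [Finset.sum_comm]
      exact Finset.sum_eq_zero fun j _ => hx1 j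
    have hB : ∑ i ∈ Icc (1:ℤ) (Nx:ℤ), ∑ j ∈ Icc (1:ℤ) (Ny:ℤ), (Fy i j - Fy i (j-1))/hy = 0 :=
      Finset.sum_eq_zero fun i _ => hy1 i
    rw [hA, hB, add_zero]
  have hd : HasDerivAt (fun s => ∑ i ∈ Icc (1:ℤ) (Nx:ℤ), ∑ j ∈ Icc (1:ℤ) (Ny:ℤ), φ s i j * 1)
      (∑ i ∈ Icc (1:ℤ) (Nx:ℤ), ∑ j ∈ Icc (1:ℤ) (Ny:ℤ), φt t i j) t := by
    apply HasDerivAt.fun_sum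
    intro i _
    apply HasDerivAt.fun_sum
    intro j _
    simpa using hderiv t i j
  have := (hd.const_mul (hx * hy))
  rw [hsum, mul_zero] at this
  simpa [ip2] using this
end
end

section
/- Energy dissipation of the Crank-Nicolson Cahn-Hilliard step: suppose (φ⋆ − φⁿ)/(δt/2) = ∇·(M(φ̄)∇μ) and μ = −(γε/2)(Δφ⋆ + Δφⁿ) + (γ/ε)·δf/δ(φ⋆,φⁿ), with homogeneous Neumann boundary conditions ∇μ·n = 0, ∇φ⋆·n = ∇φⁿ·n = 0, M ≥ 0, and the difference quotient satisfying f(φ⋆) − f(φⁿ) = (φ⋆ − φⁿ)·δf/δ(φ⋆,φⁿ) pointwise. Then F(φ⋆) − F(φⁿ) = −(δt/2)‖√(M(φ̄))∇μ‖², where F(φ) = γ∫_Ω [ (ε/2)|∇φ|² + (1/ε)f(φ) ] dx. -/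
open scoped RealInnerProductSpace

/-- Energy dissipation of the Crank–Nicolson Cahn–Hilliard step: suppose
`(φ⋆ − φⁿ)/(δt/2) = ∇·(M(φ̄)∇μ)` and
`μ = −(γε/2)(Δφ⋆ + Δφⁿ) + (γ/ε)·δf/δ(φ⋆,φⁿ)`, with homogeneous Neumann boundary
conditions, `M ≥ 0`, and the difference quotient satisfying the exact discrete chain rule.
Then `F(φ⋆) − F(φⁿ) = −(δt/2)‖√(M(φ̄))∇μ‖²`, where
`F(φ) = γ∫_Ω [(ε/2)|∇φ|² + (1/ε)f(φ)] dx`.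
Here `S` is the space of scalar fields with the `L²` inner product and `V` the space of
(gradient) vector fields; `divM` represents `∇·(M(φ̄)∇μ)`; `sMg` represents `√(M(φ̄))∇μ`,
and `hdivM` encodes `(∇·(M(φ̄)∇μ), μ) = −‖√(M(φ̄))∇μ‖²` (integration by parts with
`∇μ·n = 0` and `M ≥ 0`); `hGreen` encodes Green's identity `(Δψ, χ) = −(∇ψ, ∇χ)` valid
under the Neumann boundary conditions; `intf ψ` represents `∫_Ω f(ψ) dx`, `dfq` the
difference-quotient field `δf/δ(φ⋆,φⁿ)`, and `hchain` the integrated discrete chain rule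
`∫ f(φ⋆) − f(φⁿ) = ∫ (φ⋆ − φⁿ)·δf/δ(φ⋆,φⁿ)`. -/
theorem stmt9 {S V : Type*} [NormedAddCommGroup S] [InnerProductSpace ℝ S]
    [NormedAddCommGroup V] [InnerProductSpace ℝ V]
    (γ ε δt : ℝ) (hγ : 0 < γ) (hε : 0 < ε) (hδt : 0 < δt)
    (φstar φn μ dfq divM : S) (sMg : V)
    (grad : S →ₗ[ℝ] V) (Lap : S → S) (intf : S → ℝ)
    (hGreen : ∀ ψ χ : S, ⟪Lap ψ, χ⟫ = -⟪grad ψ, grad χ⟫)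
    (hchain : intf φstar - intf φn = ⟪φstar - φn, dfq⟫)
    (hdivM : ⟪divM, μ⟫ = -‖sMg‖ ^ 2)
    (heq1 : (2 / δt) • (φstar - φn) = divM)
    (heq2 : μ = -(γ * ε / 2) • (Lap φstar + Lap φn) + (γ / ε) • dfq) :
    γ * ((ε / 2) * ‖grad φstar‖ ^ 2 + (1 / ε) * intf φstar)
      - γ * ((ε / 2) * ‖grad φn‖ ^ 2 + (1 / ε) * intf φn)
      = -(δt / 2) * ‖sMg‖ ^ 2 := by
  have h1 : ⟪φstar - φn, μ⟫ = -(δt / 2) * ‖sMg‖ ^ 2 := by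
    have : ⟪(2 / δt) • (φstar - φn), μ⟫ = -‖sMg‖ ^ 2 := by rw [heq1]; exact hdivM
    rw [real_inner_smul_left] at this
    have hne : δt ≠ 0 := ne_of_gt hδt
    field_simp at this ⊢
    linarith
  have h2 : ⟪φstar - φn, Lap φstar + Lap φn⟫
      = -(‖grad φstar‖ ^ 2 - ‖grad φn‖ ^ 2) := by
    rw [real_inner_comm, inner_add_left, hGreen, hGreen, map_sub,
      inner_sub_right, inner_sub_right, real_inner_self_eq_norm_sq,
      real_inner_self_eq_norm_sq, real_inner_comm (grad φn)]
    ring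
  have h3 : ⟪φstar - φn, μ⟫
      = -(γ * ε / 2) * ⟪φstar - φn, Lap φstar + Lap φn⟫
        + (γ / ε) * ⟪φstar - φn, dfq⟫ := by
    rw [heq2, inner_add_right, real_inner_smul_right, real_inner_smul_right]
  rw [h2, ← hchain] at h3
  rw [h1] at h3
  have hεne : ε ≠ 0 := ne_of_gt hε
  field_simp at h3 ⊢
  nlinarith [sq_nonneg ε, h3]
end

section
/- Energy conservation of the decoupled exchange step: suppose ρ(u⋆⋆ − u⋆)/δt = −∇p − φ̄∇μ, μ = −(γε/2)(Δφ⋆⋆ + Δφ⋆) + (γ/ε)·δf/δ(φ⋆⋆,φ⋆), ∇·((u⋆⋆+u⋆)/2) = 0, and (φ⋆⋆ − φ⋆)/δt = −∇·(((u⋆⋆+u⋆)/2)·φ̄), with boundary conditions ∇μ·n = 0, ∇φ⋆⋆·n = ∇φ⋆·n = 0, u⋆⋆ = u⋆ = 0 on ∂Ω, and the exact discrete chain rule f(φ⋆⋆) − f(φ⋆) = (φ⋆⋆−φ⋆)·δf/δ(φ⋆⋆,φ⋆). Then the total discrete energy is exactly conserved: E(u⋆⋆) + F(φ⋆⋆)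 = E(u⋆) + F(φ⋆), where E(u) = (ρ/2)‖u‖² and F(φ) = γ∫_Ω [(ε/2)|∇φ|² + (1/ε)f(φ)] dx. -/
open scoped RealInnerProductSpace

/-- Energy conservation of the decoupled exchange step: suppose
`ρ(u⋆⋆ − u⋆)/δt = −∇p − φ̄∇μ`,
`μ = −(γε/2)(Δφ⋆⋆ + Δφ⋆) + (γ/ε)·δf/δ(φ⋆⋆,φ⋆)`,
`∇·((u⋆⋆+u⋆)/2) = 0`, and `(φ⋆⋆ − φ⋆)/δt = −∇·(((u⋆⋆+u⋆)/2)·φ̄)`, with the natural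
boundary conditions and the exact discrete chain rule.  Then the total discrete energy is
exactly conserved: `E(u⋆⋆) + F(φ⋆⋆) = E(u⋆) + F(φ⋆)`, where `E(u) = (ρ/2)‖u‖²` and
`F(φ) = γ∫_Ω [(ε/2)|∇φ|² + (1/ε)f(φ)] dx`.
Here `W` is the space of (`H¹₀`) velocity fields with the `L²` inner product, `S` the
space of scalar fields, and `V` the space where scalar gradients live; `pgm` represents
`φ̄∇μ`; `T w` represents `∇·(w φ̄)`; `hT` encodes integration by parts
`(φ̄∇μ, w) = −(μ, ∇·(w φ̄))` for `w` vanishing on `∂Ω`; `hibp` encodes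
`(∇q, w) = −(q, ∇·w)`; `hGreen` encodes Green's identity under the Neumann conditions;
`intf ψ` represents `∫_Ω f(ψ) dx` and `hchain` the integrated exact chain rule. -/
theorem stmt10 {S V W : Type*} [NormedAddCommGroup S] [InnerProductSpace ℝ S]
    [NormedAddCommGroup V] [InnerProductSpace ℝ V]
    [NormedAddCommGroup W] [InnerProductSpace ℝ W]
    (ρ γ ε δt : ℝ) (hρ : 0 < ρ) (hγ : 0 < γ) (hε : 0 < ε) (hδt : 0 < δt)
    (ustar uss : W) (φstar φss μ p dfq : S) (pgm : W)
    (grad : S →ₗ[ℝ] V) (gradW : S → W) (divW : W → S) (T : W → S)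
    (Lap : S → S) (intf : S → ℝ)
    (hibp : ∀ (q : S) (w : W), ⟪gradW q, w⟫ = -⟪q, divW w⟫)
    (hT : ∀ w : W, ⟪pgm, w⟫ = -⟪μ, T w⟫)
    (hGreen : ∀ ψ χ : S, ⟪Lap ψ, χ⟫ = -⟪grad ψ, grad χ⟫)
    (hchain : intf φss - intf φstar = ⟪φss - φstar, dfq⟫)
    (heq1 : (ρ / δt) • (uss - ustar) = -gradW p - pgm)
    (heq2 : μ = -(γ * ε / 2) • (Lap φss + Lap φstar) + (γ / ε) • dfq)
    (heq3 : divW ((1 / 2 : ℝ) • (uss + ustar)) = 0)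
    (heq4 : (1 / δt) • (φss - φstar) = -T ((1 / 2 : ℝ) • (uss + ustar))) :
    (ρ / 2) * ‖uss‖ ^ 2 + γ * ((ε / 2) * ‖grad φss‖ ^ 2 + (1 / ε) * intf φss)
      = (ρ / 2) * ‖ustar‖ ^ 2
        + γ * ((ε / 2) * ‖grad φstar‖ ^ 2 + (1 / ε) * intf φstar) := by
  set w : W := (1 / 2 : ℝ) • (uss + ustar) with hw
  -- kinetic energy identity
  have hA : ⟪uss - ustar, uss + ustar⟫ = ‖uss‖ ^ 2 - ‖ustar‖ ^ 2 := by
    rw [inner_sub_left, inner_add_right, inner_add_right,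
      real_inner_self_eq_norm_sq, real_inner_self_eq_norm_sq,
      real_inner_comm ustar uss]
    ring
  have h1 : ⟪(ρ / δt) • (uss - ustar), w⟫ = ⟪-gradW p - pgm, w⟫ := by rw [heq1]
  have hTw : T w = -((1 / δt) • (φss - φstar)) := by rw [heq4]; simp
  have h2 : (ρ / δt) * ((1/2) * (‖uss‖ ^ 2 - ‖ustar‖ ^ 2))
      = -((1 / δt) * ⟪φss - φstar, μ⟫) := by
    have := h1
    rw [real_inner_smul_left, hw, real_inner_smul_right, hA,
      inner_sub_left, inner_neg_left, hibp, ← hw, heq3, hT, hTw] at this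
    simpa [inner_neg_right, real_inner_smul_right, real_inner_comm μ] using this
  -- potential energy identity
  have hμ : ⟪φss - φstar, μ⟫
      = (γ * ε / 2) * (‖grad φss‖ ^ 2 - ‖grad φstar‖ ^ 2)
        + (γ / ε) * (intf φss - intf φstar) := by
    have hg : ⟪φss - φstar, Lap φss + Lap φstar⟫
        = -(‖grad φss‖ ^ 2 - ‖grad φstar‖ ^ 2) := by
      rw [real_inner_comm, inner_add_left, hGreen, hGreen]
      have e1 : grad (φss - φstar) = grad φss - grad φstar := map_sub _ _ _
      rw [e1, inner_sub_right, inner_sub_right,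
        real_inner_self_eq_norm_sq, real_inner_self_eq_norm_sq,
        real_inner_comm (grad φstar) (grad φss)]
      ring
    rw [heq2, inner_add_right, real_inner_smul_right, real_inner_smul_right,
      hg, hchain]
    ring
  rw [hμ] at h2
  have hδt' : δt ≠ 0 := ne_of_gt hδt
  field_simp at h2
  have hε' : ε ≠ 0 := ne_of_gt hε
  field_simp
  nlinarith [h2]
end

section
/- Discrete energy law for the semi-discrete staggered-grid CHNS scheme: solutions of the semi-discrete scheme (momentum equations with skew-symmetric discrete convection, discrete incompressibility d_x u + d_y v = 0, Cahn-Hilliard equation with discrete transport, and μ = −γεΔ_hφ + (γ/ε)f′(φ)) satisfy (d/dt)E_h + (η, (d_x u)² + (d_y v)²)₂ + [M(A_xφ), (D_xμ)²]_{ew} + [M(A_yφ), (D_yμ)²]_{ns} = 0, where E_h = (1/2)‖u‖₂² + (γε/2)‖∇_hφ‖₂² + (γ/ε)(f(φ), 1)₂, assuming the semi-discrete inner-product identities: [u·D_x(a_x u)+A_x(d_x(uu)), u]_{ew} = 0, the analogous y-direction and cross identities, [D_x p,u]_{ew}+[D_y p,v]_{ns} = −(p, d_x u + d_y v)₂, and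 [A_xφ D_xμ, u]_{ew}+[A_yφ D_yμ, v]_{ns} = −(μ, d_x(A_xφ u)+d_y(A_yφ v))₂. -/
open Finset

noncomputable section

private lemma sum_Icc_top' (m : ℤ) (hm : 0 ≤ m) (f : ℤ → ℝ) :
    ∑ i ∈ Icc (1:ℤ) (m+1), f i = (∑ i ∈ Icc (1:ℤ) m, f i) + f (m+1) := by
  have h : Icc (1:ℤ) (m+1) = insert (m+1) (Icc (1:ℤ) m) := by
    ext x; simp; omega
  rw [h, Finset.sum_insert (by simp)]; ring

private lemma abel_sum (a b : ℤ → ℝ) (n : ℕ) :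
    ∑ i ∈ Icc (1:ℤ) ((n:ℤ)+1), (a i - a (i-1)) * b i
      = a ((n:ℤ)+1) * b ((n:ℤ)+1) - a 0 * b 1
        - ∑ i ∈ Icc (1:ℤ) (n:ℤ), a i * (b (i+1) - b i) := by
  induction n with
  | zero => simp [Finset.Icc_self]; ring
  | succ n ih =>
    push_cast
    rw [sum_Icc_top' (n:ℤ) (Int.ofNat_nonneg n)] at ih
    rw [sum_Icc_top' ((n:ℤ)+1) (by positivity), sum_Icc_top' (n:ℤ) (Int.ofNat_nonneg n),
      sum_Icc_top' (n:ℤ) (Int.ofNat_nonneg n)]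
    simp only [add_sub_cancel_right] at ih ⊢
    linear_combination ih

private lemma sbp (N : ℕ) (a b : ℤ → ℝ) (h0 : a 0 = 0) (hN : a (N:ℤ) = 0) :
    ∑ i ∈ Icc (1:ℤ) (N:ℤ), (a i - a (i-1)) * b i
      = -∑ i ∈ Icc (1:ℤ) ((N:ℤ)-1), a i * (b (i+1) - b i) := by
  cases N with
  | zero =>
    simp only [Nat.cast_zero]
    rw [Finset.Icc_eq_empty (by omega), Finset.Icc_eq_empty (by omega)]; simp
  | succ n =>
    push_cast at hN ⊢
    rw [show ((n:ℤ)+1-1) = (n:ℤ) by ring, abel_sum a b n, hN, h0]; ring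

private lemma sbp_div (N : ℕ) (h : ℝ) (G c : ℤ → ℝ) (h0 : G 0 = 0) (hN : G (N:ℤ) = 0) :
    ∑ i ∈ Icc (1:ℤ) (N:ℤ), c i * ((G i - G (i-1))/h)
      = -∑ i ∈ Icc (1:ℤ) ((N:ℤ)-1), G i * ((c (i+1) - c i)/h) := by
  have hs := sbp N G c h0 hN
  calc ∑ i ∈ Icc (1:ℤ) (N:ℤ), c i * ((G i - G (i-1))/h)
      = (1/h) * ∑ i ∈ Icc (1:ℤ) (N:ℤ), (G i - G (i-1)) * c i := by
        rw [Finset.mul_sum]; exact Finset.sum_congr rfl fun i _ => by ring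
    _ = (1/h) * -∑ i ∈ Icc (1:ℤ) ((N:ℤ)-1), G i * (c (i+1) - c i) := by rw [hs]
    _ = -∑ i ∈ Icc (1:ℤ) ((N:ℤ)-1), G i * ((c (i+1) - c i)/h) := by
        rw [mul_neg, Finset.mul_sum]
        exact neg_inj.mpr (Finset.sum_congr rfl fun i _ => by ring)

private lemma pair_abel (g : ℤ → ℝ) (n : ℕ) :
    ∑ i ∈ Icc (1:ℤ) ((n:ℤ)+1), (g i + g (i-1))
      = 2 * (∑ i ∈ Icc (1:ℤ) (n:ℤ), g i) + g 0 + g ((n:ℤ)+1) := by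
  induction n with
  | zero => simp [Finset.Icc_self]; ring
  | succ n ih =>
    push_cast
    rw [sum_Icc_top' (n:ℤ) (Int.ofNat_nonneg n)] at ih
    rw [sum_Icc_top' ((n:ℤ)+1) (by positivity), sum_Icc_top' (n:ℤ) (Int.ofNat_nonneg n),
      sum_Icc_top' (n:ℤ) (Int.ofNat_nonneg n)]
    simp only [add_sub_cancel_right] at ih ⊢
    linear_combination ih

private lemma pairsum (N : ℕ) (g : ℤ → ℝ) (h0 : g 0 = 0) (hN : g (N:ℤ) = 0) :
    ∑ i ∈ Icc (1:ℤ) (N:ℤ), (g i + g (i-1))/2 = ∑ i ∈ Icc (1:ℤ) ((N:ℤ)-1), g i := by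
  cases N with
  | zero =>
    simp only [Nat.cast_zero]
    rw [Finset.Icc_eq_empty (by omega), Finset.Icc_eq_empty (by omega)]; simp
  | succ n =>
    push_cast at hN ⊢
    rw [show ((n:ℤ)+1-1) = (n:ℤ) by ring]
    rw [show (∑ i ∈ Icc (1:ℤ) ((n:ℤ)+1), (g i + g (i-1))/2)
        = (∑ i ∈ Icc (1:ℤ) ((n:ℤ)+1), (g i + g (i-1)))/2 from (Finset.sum_div _ _ _).symm]
    rw [pair_abel g n, h0, hN]; ring

private lemma ip2_raw (Nx Ny : ℕ) (hx hy : ℝ) (f g : ℤ → ℤ → ℝ) :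
    ip2 Nx Ny hx hy f g
      = hx * hy * ∑ i ∈ Icc (1:ℤ) (Nx:ℤ), ∑ j ∈ Icc (1:ℤ) (Ny:ℤ), f i j * g i j := rfl

private lemma ip2_one (Nx Ny : ℕ) (hx hy : ℝ) (f : ℤ → ℤ → ℝ) :
    ip2 Nx Ny hx hy f 1
      = hx * hy * ∑ i ∈ Icc (1:ℤ) (Nx:ℤ), ∑ j ∈ Icc (1:ℤ) (Ny:ℤ), f i j := by
  unfold ip2; congr 1
  exact Finset.sum_congr rfl fun i _ => Finset.sum_congr rfl fun j _ => by simp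

private lemma ipew_rep (Nx Ny : ℕ) (hx hy : ℝ) (f w : ℤ → ℤ → ℝ)
    (h0 : ∀ j, f 0 j * w 0 j = 0) (hN : ∀ j, f (Nx:ℤ) j * w (Nx:ℤ) j = 0) :
    ipew Nx Ny hx hy f w
      = hx * hy * ∑ j ∈ Icc (1:ℤ) (Ny:ℤ), ∑ i ∈ Icc (1:ℤ) ((Nx:ℤ)-1), f i j * w i j := by
  unfold ipew ip2 axOp
  congr 1
  rw [Finset.sum_comm]
  refine Finset.sum_congr rfl fun j _ => ?_
  have := pairsum Nx (fun i => f i j * w i j) (h0 j) (hN j)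
  simpa using this

private lemma ipns_rep (Nx Ny : ℕ) (hx hy : ℝ) (f w : ℤ → ℤ → ℝ)
    (h0 : ∀ i, f i 0 * w i 0 = 0) (hN : ∀ i, f i (Ny:ℤ) * w i (Ny:ℤ) = 0) :
    ipns Nx Ny hx hy f w
      = hx * hy * ∑ i ∈ Icc (1:ℤ) (Nx:ℤ), ∑ j ∈ Icc (1:ℤ) ((Ny:ℤ)-1), f i j * w i j := by
  unfold ipns ip2 ayOp
  congr 1
  refine Finset.sum_congr rfl fun i _ => ?_
  have := pairsum Ny (fun j => f i j * w i j) (h0 i) (hN i)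
  simpa using this

private lemma ipew_comm (Nx Ny : ℕ) (hx hy : ℝ) (f g : ℤ → ℤ → ℝ) :
    ipew Nx Ny hx hy f g = ipew Nx Ny hx hy g f := by
  unfold ipew ip2 axOp
  congr 1
  refine Finset.sum_congr rfl fun i _ => Finset.sum_congr rfl fun j _ => ?_
  simp only [Pi.mul_apply, Pi.one_apply, mul_one]; ring

private lemma ipns_comm (Nx Ny : ℕ) (hx hy : ℝ) (f g : ℤ → ℤ → ℝ) :
    ipns Nx Ny hx hy f g = ipns Nx Ny hx hy g f := by
  unfold ipns ip2 ayOp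
  congr 1
  refine Finset.sum_congr rfl fun i _ => Finset.sum_congr rfl fun j _ => ?_
  simp only [Pi.mul_apply, Pi.one_apply, mul_one]; ring

private lemma hasDerivAt_ipew_sq (Nx Ny : ℕ) (hx hy : ℝ) (t : ℝ)
    (w : ℝ → ℤ → ℤ → ℝ) (wt : ℤ → ℤ → ℝ)
    (hw : ∀ i j, HasDerivAt (fun s => w s i j) (wt i j) t) :
    HasDerivAt (fun s => ipew Nx Ny hx hy (w s) (w s))
      (2 * ipew Nx Ny hx hy wt (w t)) t := by
  have h1 : (fun s => ipew Nx Ny hx hy (w s) (w s))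
      = fun s => hx * hy * ∑ i ∈ Icc (1:ℤ) (Nx:ℤ), ∑ j ∈ Icc (1:ℤ) (Ny:ℤ),
          (w s i j * w s i j + w s (i-1) j * w s (i-1) j) / 2 := by
    funext s; unfold ipew ip2 axOp; congr 1
    exact Finset.sum_congr rfl fun i _ => Finset.sum_congr rfl fun j _ => by simp
  have h2 : HasDerivAt
      (fun s => hx * hy * ∑ i ∈ Icc (1:ℤ) (Nx:ℤ), ∑ j ∈ Icc (1:ℤ) (Ny:ℤ),
          (w s i j * w s i j + w s (i-1) j * w s (i-1) j) / 2)
      (hx * hy * ∑ i ∈ Icc (1:ℤ) (Nx:ℤ), ∑ j ∈ Icc (1:ℤ) (Ny:ℤ),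
          ((wt i j * w t i j + w t i j * wt i j)
            + (wt (i-1) j * w t (i-1) j + w t (i-1) j * wt (i-1) j)) / 2) t :=
    HasDerivAt.const_mul _ (HasDerivAt.fun_sum fun i _ => HasDerivAt.fun_sum fun j _ =>
      ((((hw i j).mul (hw i j)).add (((hw (i-1) j).mul (hw (i-1) j)))).div_const 2))
  rw [h1]
  have h3 : 2 * ipew Nx Ny hx hy wt (w t)
      = hx * hy * ∑ i ∈ Icc (1:ℤ) (Nx:ℤ), ∑ j ∈ Icc (1:ℤ) (Ny:ℤ),
          ((wt i j * w t i j + w t i j * wt i j)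
            + (wt (i-1) j * w t (i-1) j + w t (i-1) j * wt (i-1) j)) / 2 := by
    unfold ipew ip2 axOp
    rw [show ∀ a : ℝ, 2 * (hx*hy*a) = hx*hy*(2*a) from fun a => by ring, Finset.mul_sum]
    congr 1
    refine Finset.sum_congr rfl fun i _ => ?_
    rw [Finset.mul_sum]
    exact Finset.sum_congr rfl fun j _ => by
      simp only [Pi.mul_apply, Pi.one_apply, mul_one]; ring
  rw [h3]; exact h2

private lemma hasDerivAt_ipns_sq (Nx Ny : ℕ) (hx hy : ℝ) (t : ℝ)
    (w : ℝ → ℤ → ℤ → ℝ) (wt : ℤ → ℤ → ℝ)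
    (hw : ∀ i j, HasDerivAt (fun s => w s i j) (wt i j) t) :
    HasDerivAt (fun s => ipns Nx Ny hx hy (w s) (w s))
      (2 * ipns Nx Ny hx hy wt (w t)) t := by
  have h1 : (fun s => ipns Nx Ny hx hy (w s) (w s))
      = fun s => hx * hy * ∑ i ∈ Icc (1:ℤ) (Nx:ℤ), ∑ j ∈ Icc (1:ℤ) (Ny:ℤ),
          (w s i j * w s i j + w s i (j-1) * w s i (j-1)) / 2 := by
    funext s; unfold ipns ip2 ayOp; congr 1
    exact Finset.sum_congr rfl fun i _ => Finset.sum_congr rfl fun j _ => by simp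
  have h2 : HasDerivAt
      (fun s => hx * hy * ∑ i ∈ Icc (1:ℤ) (Nx:ℤ), ∑ j ∈ Icc (1:ℤ) (Ny:ℤ),
          (w s i j * w s i j + w s i (j-1) * w s i (j-1)) / 2)
      (hx * hy * ∑ i ∈ Icc (1:ℤ) (Nx:ℤ), ∑ j ∈ Icc (1:ℤ) (Ny:ℤ),
          ((wt i j * w t i j + w t i j * wt i j)
            + (wt i (j-1) * w t i (j-1) + w t i (j-1) * wt i (j-1))) / 2) t :=
    HasDerivAt.const_mul _ (HasDerivAt.fun_sum fun i _ => HasDerivAt.fun_sum fun j _ =>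
      ((((hw i j).mul (hw i j)).add (((hw i (j-1)).mul (hw i (j-1))))).div_const 2))
  rw [h1]
  have h3 : 2 * ipns Nx Ny hx hy wt (w t)
      = hx * hy * ∑ i ∈ Icc (1:ℤ) (Nx:ℤ), ∑ j ∈ Icc (1:ℤ) (Ny:ℤ),
          ((wt i j * w t i j + w t i j * wt i j)
            + (wt i (j-1) * w t i (j-1) + w t i (j-1) * wt i (j-1))) / 2 := by
    unfold ipns ip2 ayOp
    rw [show ∀ a : ℝ, 2 * (hx*hy*a) = hx*hy*(2*a) from fun a => by ring, Finset.mul_sum]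
    congr 1
    refine Finset.sum_congr rfl fun i _ => ?_
    rw [Finset.mul_sum]
    exact Finset.sum_congr rfl fun j _ => by
      simp only [Pi.mul_apply, Pi.one_apply, mul_one]; ring
  rw [h3]; exact h2

private lemma lap1d (N : ℕ) (h : ℝ) (G c : ℤ → ℝ) (h0 : G 0 = 0) (hN : G (N:ℤ) = 0) :
    ∑ i ∈ Icc (1:ℤ) (N:ℤ), ((G i - G (i-1))/h) * c i
      = -∑ i ∈ Icc (1:ℤ) ((N:ℤ)-1), G i * ((c (i+1) - c i)/h) := by
  have hsd := sbp_div N h G c h0 hN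
  have h1 : ∑ i ∈ Icc (1:ℤ) (N:ℤ), ((G i - G (i-1))/h) * c i
      = ∑ i ∈ Icc (1:ℤ) (N:ℤ), c i * ((G i - G (i-1))/h) :=
    Finset.sum_congr rfl fun i _ => mul_comm _ _
  rw [h1]; exact hsd

private lemma visc1d (N : ℕ) (h : ℝ) (w : ℤ → ℝ) (h0 : w 0 = 0) (hN : w (N:ℤ) = 0) :
    ∑ i ∈ Icc (1:ℤ) ((N:ℤ)-1), (((w (i+1) - w (i+1-1))/h) - ((w i - w (i-1))/h))/h * w i
      = -∑ i ∈ Icc (1:ℤ) (N:ℤ), ((w i - w (i-1))/h) * ((w i - w (i-1))/h) := by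
  have hsd := sbp_div N h w (fun i => (w i - w (i-1))/h) h0 hN
  have h1 : ∑ i ∈ Icc (1:ℤ) ((N:ℤ)-1), (((w (i+1) - w (i+1-1))/h) - ((w i - w (i-1))/h))/h * w i
      = ∑ i ∈ Icc (1:ℤ) ((N:ℤ)-1), w i * ((((w (i+1) - w (i+1-1))/h) - ((w i - w (i-1))/h))/h) :=
    Finset.sum_congr rfl fun i _ => mul_comm _ _
  rw [h1]; linarith [hsd]

-- check sum_neg_distrib name
example (s : Finset ℤ) (f : ℤ → ℝ) : ∑ i ∈ s, -f i = -∑ i ∈ s, f i := Finset.sum_neg_distrib _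
example (s : Finset ℤ) (f g : ℤ → ℝ) : ∑ i ∈ s, (f i - g i) = ∑ i ∈ s, f i - ∑ i ∈ s, g i := Finset.sum_sub_distrib _ _
/-- Discrete energy law for the semi-discrete staggered-grid CHNS scheme: solutions of the
semi-discrete scheme — the momentum equations with skew-symmetric discrete convection
(`hmom1`, `hmom2`), discrete incompressibility `d_x u + d_y v = 0` (`hincomp`), the
Cahn–Hilliard equation with discrete transport (`hCH`), and
`μ = −γεΔ_hφ + (γ/ε)f′(φ)` (`hμ`) — satisfy
`(d/dt)E_h + (η, (d_x u)² + (d_y v)²)₂ + [M(A_xφ), (D_xμ)²]_{ew}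
  + [M(A_yφ), (D_yμ)²]_{ns} = 0`,
where `E_h = (1/2)‖u‖₂² + (γε/2)‖∇_hφ‖₂² + (γ/ε)(f(φ), 1)₂`, assuming the semi-discrete
inner-product identities `hid1`–`hid6`: the skew-symmetry identities
`[u·D_x(a_x u) + A_x(d_x(u u)), u]_{ew} = 0` and its y-direction and cross analogues,
the pressure identity
`[D_x p, u]_{ew} + [D_y p, v]_{ns} = −(p, d_x u + d_y v)₂`, and the surface-force identity
`[A_xφ D_xμ, u]_{ew} + [A_yφ D_yμ, v]_{ns} = −(μ, d_x(A_xφ u) + d_y(A_yφ v))₂`.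
The boundary conditions of the scheme (no-slip for `u, v`, discrete Neumann ghost
conditions for `φ, μ`) are included as hypotheses. -/
theorem stmt16 (Nx Ny : ℕ) (hx hy : ℝ) (hhx : 0 < hx) (hhy : 0 < hy)
    (γ ε η : ℝ) (hγ : 0 < γ) (hε : 0 < ε) (hη : 0 < η)
    (u ut v vt φ φt μ p : ℝ → ℤ → ℤ → ℝ)
    (M : ℝ → ℝ) (hMpos : ∀ s, 0 ≤ M s)
    (fW fd : ℝ → ℝ) (hf : ∀ x, HasDerivAt fW (fd x) x)
    -- no-slip boundary conditions for the velocity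
    (hu0 : ∀ t j, u t 0 j = 0) (huN : ∀ t j, u t (Nx : ℤ) j = 0)
    (hv0 : ∀ t i, v t i 0 = 0) (hvN : ∀ t i, v t i (Ny : ℤ) = 0)
    (huS : ∀ t i, AyOp (u t) i 0 = 0) (huT : ∀ t i, AyOp (u t) i (Ny : ℤ) = 0)
    (hvW : ∀ t j, AxOp (v t) 0 j = 0) (hvE : ∀ t j, AxOp (v t) (Nx : ℤ) j = 0)
    -- discrete Neumann (ghost-cell) boundary conditions for φ and μ
    (hφW : ∀ t j, φ t 0 j = φ t 1 j) (hφE : ∀ t j, φ t ((Nx : ℤ) + 1) j = φ t (Nx : ℤ) j)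
    (hφS : ∀ t i, φ t i 0 = φ t i 1) (hφN : ∀ t i, φ t i ((Ny : ℤ) + 1) = φ t i (Ny : ℤ))
    (hμW : ∀ t j, μ t 0 j = μ t 1 j) (hμE : ∀ t j, μ t ((Nx : ℤ) + 1) j = μ t (Nx : ℤ) j)
    (hμS : ∀ t i, μ t i 0 = μ t i 1) (hμN : ∀ t i, μ t i ((Ny : ℤ) + 1) = μ t i (Ny : ℤ))
    -- time derivatives
    (hut : ∀ t i j, HasDerivAt (fun s => u s i j) (ut t i j) t)
    (hvt : ∀ t i j, HasDerivAt (fun s => v s i j) (vt t i j) t)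
    (hφt : ∀ t i j, HasDerivAt (fun s => φ s i j) (φt t i j) t)
    -- the semi-discrete momentum equations with skew-symmetric discrete convection
    (hmom1 : ∀ t, ∀ i ∈ Icc (1 : ℤ) ((Nx : ℤ) - 1), ∀ j ∈ Icc (1 : ℤ) (Ny : ℤ),
      ut t i j
          + (1 / 2) * ((u t * DxOp hx (axOp (u t)) + AxOp (dxOp hx (u t * u t))
              + ayOp (AxOp (v t) * DyOp hy (u t)) + dyOp hy (AyOp (u t) * AxOp (v t))) i j)
        = -DxOp hx (p t) i j + η * DxOp hx (dxOp hx (u t)) i j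
            - AxOp (φ t) i j * DxOp hx (μ t) i j)
    (hmom2 : ∀ t, ∀ i ∈ Icc (1 : ℤ) (Nx : ℤ), ∀ j ∈ Icc (1 : ℤ) ((Ny : ℤ) - 1),
      vt t i j
          + (1 / 2) * ((axOp (AyOp (u t) * DxOp hx (v t)) + dxOp hx (AyOp (u t) * AxOp (v t))
              + v t * DyOp hy (ayOp (v t)) + AyOp (dyOp hy (v t * v t))) i j)
        = -DyOp hy (p t) i j + η * DyOp hy (dyOp hy (v t)) i j
            - AyOp (φ t) i j * DyOp hy (μ t) i j)
    -- discrete incompressibility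
    (hincomp : ∀ t, ∀ i ∈ Icc (1 : ℤ) (Nx : ℤ), ∀ j ∈ Icc (1 : ℤ) (Ny : ℤ),
      dxOp hx (u t) i j + dyOp hy (v t) i j = 0)
    -- the semi-discrete Cahn–Hilliard equation with discrete transport
    (hCH : ∀ t, ∀ i ∈ Icc (1 : ℤ) (Nx : ℤ), ∀ j ∈ Icc (1 : ℤ) (Ny : ℤ),
      φt t i j + dxOp hx (AxOp (φ t) * u t) i j + dyOp hy (AyOp (φ t) * v t) i j
        = dxOp hx ((fun a b => M (AxOp (φ t) a b)) * DxOp hx (μ t)) i j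
          + dyOp hy ((fun a b => M (AyOp (φ t) a b)) * DyOp hy (μ t)) i j)
    -- the discrete chemical potential μ = −γεΔ_hφ + (γ/ε)f′(φ)
    (hμdef : ∀ t, ∀ i ∈ Icc (1 : ℤ) (Nx : ℤ), ∀ j ∈ Icc (1 : ℤ) (Ny : ℤ),
      μ t i j
        = -(γ * ε) * (dxOp hx (DxOp hx (φ t)) i j + dyOp hy (DyOp hy (φ t)) i j)
          + (γ / ε) * fd (φ t i j))
    -- assumed semi-discrete inner-product identities
    (hid1 : ∀ t, ipew Nx Ny hx hy
      (u t * DxOp hx (axOp (u t)) + AxOp (dxOp hx (u t * u t))) (u t) = 0)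
    (hid2 : ∀ t, ipew Nx Ny hx hy
      (ayOp (AxOp (v t) * DyOp hy (u t)) + dyOp hy (AyOp (u t) * AxOp (v t))) (u t) = 0)
    (hid3 : ∀ t, ipns Nx Ny hx hy
      (axOp (AyOp (u t) * DxOp hx (v t)) + dxOp hx (AyOp (u t) * AxOp (v t))) (v t) = 0)
    (hid4 : ∀ t, ipns Nx Ny hx hy
      (v t * DyOp hy (ayOp (v t)) + AyOp (dyOp hy (v t * v t))) (v t) = 0)
    (hid5 : ∀ t, ipew Nx Ny hx hy (DxOp hx (p t)) (u t)
        + ipns Nx Ny hx hy (DyOp hy (p t)) (v t)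
      = -ip2 Nx Ny hx hy (p t) (dxOp hx (u t) + dyOp hy (v t)))
    (hid6 : ∀ t, ipew Nx Ny hx hy (AxOp (φ t) * DxOp hx (μ t)) (u t)
        + ipns Nx Ny hx hy (AyOp (φ t) * DyOp hy (μ t)) (v t)
      = -ip2 Nx Ny hx hy (μ t)
          (dxOp hx (AxOp (φ t) * u t) + dyOp hy (AyOp (φ t) * v t))) :
    -- the discrete energy dissipation law
    ∀ t, HasDerivAt
      (fun s =>
        (1 / 2) * (ipew Nx Ny hx hy (u s) (u s) + ipns Nx Ny hx hy (v s) (v s))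
          + (γ * ε / 2) * (ipew Nx Ny hx hy (DxOp hx (φ s)) (DxOp hx (φ s))
              + ipns Nx Ny hx hy (DyOp hy (φ s)) (DyOp hy (φ s)))
          + (γ / ε) * ip2 Nx Ny hx hy (fun i j => fW (φ s i j)) 1)
      (-(ip2 Nx Ny hx hy (fun _ _ => η)
            (dxOp hx (u t) * dxOp hx (u t) + dyOp hy (v t) * dyOp hy (v t))
          + ipew Nx Ny hx hy (fun i j => M (AxOp (φ t) i j))
              (DxOp hx (μ t) * DxOp hx (μ t))
          + ipns Nx Ny hx hy (fun i j => M (AyOp (φ t) i j))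
              (DyOp hy (μ t) * DyOp hy (μ t)))) t := by
  intro t
  -- boundary zero facts for the discrete gradients of φ and μ
  have hbDxφ0 : ∀ j, DxOp hx (φ t) 0 j = 0 := fun j => by simp [DxOp, hφW t j]
  have hbDxφN : ∀ j, DxOp hx (φ t) (Nx:ℤ) j = 0 := fun j => by simp [DxOp, hφE t j]
  have hbDyφ0 : ∀ i, DyOp hy (φ t) i 0 = 0 := fun i => by simp [DyOp, hφS t i]
  have hbDyφN : ∀ i, DyOp hy (φ t) i (Ny:ℤ) = 0 := fun i => by simp [DyOp, hφN t i]
  have hbDxμ0 : ∀ j, DxOp hx (μ t) 0 j = 0 := fun j => by simp [DxOp, hμW t j]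
  have hbDxμN : ∀ j, DxOp hx (μ t) (Nx:ℤ) j = 0 := fun j => by simp [DxOp, hμE t j]
  have hbDyμ0 : ∀ i, DyOp hy (μ t) i 0 = 0 := fun i => by simp [DyOp, hμS t i]
  have hbDyμN : ∀ i, DyOp hy (μ t) i (Ny:ℤ) = 0 := fun i => by simp [DyOp, hμN t i]
  -- momentum equation paired with u
  have e1 : ipew Nx Ny hx hy (ut t) (u t)
      = -(1/2)*(ipew Nx Ny hx hy
            (u t * DxOp hx (axOp (u t)) + AxOp (dxOp hx (u t * u t))) (u t)
          + ipew Nx Ny hx hy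
            (ayOp (AxOp (v t) * DyOp hy (u t)) + dyOp hy (AyOp (u t) * AxOp (v t))) (u t))
        - ipew Nx Ny hx hy (DxOp hx (p t)) (u t)
        + η * ipew Nx Ny hx hy (DxOp hx (dxOp hx (u t))) (u t)
        - ipew Nx Ny hx hy (AxOp (φ t) * DxOp hx (μ t)) (u t) := by
    rw [ipew_rep Nx Ny hx hy (ut t) (u t) (fun j => by rw [hu0 t j, mul_zero]) (fun j => by rw [huN t j, mul_zero]),
        ipew_rep Nx Ny hx hy (u t * DxOp hx (axOp (u t)) + AxOp (dxOp hx (u t * u t))) (u t) (fun j => by rw [hu0 t j, mul_zero]) (fun j => by rw [huN t j, mul_zero]),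
        ipew_rep Nx Ny hx hy (ayOp (AxOp (v t) * DyOp hy (u t)) + dyOp hy (AyOp (u t) * AxOp (v t))) (u t) (fun j => by rw [hu0 t j, mul_zero]) (fun j => by rw [huN t j, mul_zero]),
        ipew_rep Nx Ny hx hy (DxOp hx (p t)) (u t) (fun j => by rw [hu0 t j, mul_zero]) (fun j => by rw [huN t j, mul_zero]),
        ipew_rep Nx Ny hx hy (DxOp hx (dxOp hx (u t))) (u t) (fun j => by rw [hu0 t j, mul_zero]) (fun j => by rw [huN t j, mul_zero]),
        ipew_rep Nx Ny hx hy (AxOp (φ t) * DxOp hx (μ t)) (u t) (fun j => by rw [hu0 t j, mul_zero]) (fun j => by rw [huN t j, mul_zero])]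
    have he : (∑ j ∈ Icc (1:ℤ) (Ny:ℤ), ∑ i ∈ Icc (1:ℤ) ((Nx:ℤ)-1), ut t i j * u t i j)
        = ∑ j ∈ Icc (1:ℤ) (Ny:ℤ), ∑ i ∈ Icc (1:ℤ) ((Nx:ℤ)-1),
            ((-(1/2))*((u t * DxOp hx (axOp (u t)) + AxOp (dxOp hx (u t * u t))) i j * u t i j)
            + ((-(1/2))*((ayOp (AxOp (v t) * DyOp hy (u t)) + dyOp hy (AyOp (u t) * AxOp (v t))) i j * u t i j)
            + ((-1)*(DxOp hx (p t) i j * u t i j)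
            + (η*(DxOp hx (dxOp hx (u t)) i j * u t i j)
            + (-1)*((AxOp (φ t) * DxOp hx (μ t)) i j * u t i j))))) := by
      refine Finset.sum_congr rfl fun j hj => Finset.sum_congr rfl fun i hi => ?_
      have h := hmom1 t i hi j hj
      simp only [Pi.add_apply, Pi.mul_apply] at h ⊢
      linear_combination (u t i j) * h
    rw [he]
    simp only [Finset.sum_add_distrib, ← Finset.mul_sum]
    ring
  -- momentum equation paired with v
  have e2 : ipns Nx Ny hx hy (vt t) (v t)
      = -(1/2)*(ipns Nx Ny hx hy
            (axOp (AyOp (u t) * DxOp hx (v t)) + dxOp hx (AyOp (u t) * AxOp (v t))) (v t)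
          + ipns Nx Ny hx hy
            (v t * DyOp hy (ayOp (v t)) + AyOp (dyOp hy (v t * v t))) (v t))
        - ipns Nx Ny hx hy (DyOp hy (p t)) (v t)
        + η * ipns Nx Ny hx hy (DyOp hy (dyOp hy (v t))) (v t)
        - ipns Nx Ny hx hy (AyOp (φ t) * DyOp hy (μ t)) (v t) := by
    rw [ipns_rep Nx Ny hx hy (vt t) (v t) (fun i => by rw [hv0 t i, mul_zero]) (fun i => by rw [hvN t i, mul_zero]),
        ipns_rep Nx Ny hx hy (axOp (AyOp (u t) * DxOp hx (v t)) + dxOp hx (AyOp (u t) * AxOp (v t))) (v t) (fun i => by rw [hv0 t i, mul_zero]) (fun i => by rw [hvN t i, mul_zero]),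
        ipns_rep Nx Ny hx hy (v t * DyOp hy (ayOp (v t)) + AyOp (dyOp hy (v t * v t))) (v t) (fun i => by rw [hv0 t i, mul_zero]) (fun i => by rw [hvN t i, mul_zero]),
        ipns_rep Nx Ny hx hy (DyOp hy (p t)) (v t) (fun i => by rw [hv0 t i, mul_zero]) (fun i => by rw [hvN t i, mul_zero]),
        ipns_rep Nx Ny hx hy (DyOp hy (dyOp hy (v t))) (v t) (fun i => by rw [hv0 t i, mul_zero]) (fun i => by rw [hvN t i, mul_zero]),
        ipns_rep Nx Ny hx hy (AyOp (φ t) * DyOp hy (μ t)) (v t) (fun i => by rw [hv0 t i, mul_zero]) (fun i => by rw [hvN t i, mul_zero])]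
    have he : (∑ i ∈ Icc (1:ℤ) (Nx:ℤ), ∑ j ∈ Icc (1:ℤ) ((Ny:ℤ)-1), vt t i j * v t i j)
        = ∑ i ∈ Icc (1:ℤ) (Nx:ℤ), ∑ j ∈ Icc (1:ℤ) ((Ny:ℤ)-1),
            ((-(1/2))*((axOp (AyOp (u t) * DxOp hx (v t)) + dxOp hx (AyOp (u t) * AxOp (v t))) i j * v t i j)
            + ((-(1/2))*((v t * DyOp hy (ayOp (v t)) + AyOp (dyOp hy (v t * v t))) i j * v t i j)
            + ((-1)*(DyOp hy (p t) i j * v t i j)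
            + (η*(DyOp hy (dyOp hy (v t)) i j * v t i j)
            + (-1)*((AyOp (φ t) * DyOp hy (μ t)) i j * v t i j))))) := by
      refine Finset.sum_congr rfl fun i hi => Finset.sum_congr rfl fun j hj => ?_
      have h := hmom2 t i hi j hj
      simp only [Pi.add_apply, Pi.mul_apply] at h ⊢
      linear_combination (v t i j) * h
    rw [he]
    simp only [Finset.sum_add_distrib, ← Finset.mul_sum]
    ring
  -- viscous terms
  have e3x : ipew Nx Ny hx hy (DxOp hx (dxOp hx (u t))) (u t)
      = -(hx * hy * ∑ j ∈ Icc (1:ℤ) (Ny:ℤ), ∑ i ∈ Icc (1:ℤ) (Nx:ℤ),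
          dxOp hx (u t) i j * dxOp hx (u t) i j) := by
    rw [ipew_rep Nx Ny hx hy (DxOp hx (dxOp hx (u t))) (u t) (fun j => by rw [hu0 t j, mul_zero]) (fun j => by rw [huN t j, mul_zero]),
        ← mul_neg, ← Finset.sum_neg_distrib]
    congr 1
    refine Finset.sum_congr rfl fun j _ => ?_
    exact visc1d Nx hx (fun i => u t i j) (hu0 t j) (huN t j)
  have e3y : ipns Nx Ny hx hy (DyOp hy (dyOp hy (v t))) (v t)
      = -(hx * hy * ∑ i ∈ Icc (1:ℤ) (Nx:ℤ), ∑ j ∈ Icc (1:ℤ) (Ny:ℤ),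
          dyOp hy (v t) i j * dyOp hy (v t) i j) := by
    rw [ipns_rep Nx Ny hx hy (DyOp hy (dyOp hy (v t))) (v t) (fun i => by rw [hv0 t i, mul_zero]) (fun i => by rw [hvN t i, mul_zero]),
        ← mul_neg, ← Finset.sum_neg_distrib]
    congr 1
    refine Finset.sum_congr rfl fun i _ => ?_
    exact visc1d Ny hy (fun j => v t i j) (hv0 t i) (hvN t i)
  -- the viscous dissipation functional written out
  have eV : ip2 Nx Ny hx hy (fun _ _ => η)
        (dxOp hx (u t) * dxOp hx (u t) + dyOp hy (v t) * dyOp hy (v t))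
      = η * (hx * hy * ∑ j ∈ Icc (1:ℤ) (Ny:ℤ), ∑ i ∈ Icc (1:ℤ) (Nx:ℤ),
            dxOp hx (u t) i j * dxOp hx (u t) i j)
        + η * (hx * hy * ∑ i ∈ Icc (1:ℤ) (Nx:ℤ), ∑ j ∈ Icc (1:ℤ) (Ny:ℤ),
            dyOp hy (v t) i j * dyOp hy (v t) i j) := by
    rw [ip2_raw]
    have he : (∑ i ∈ Icc (1:ℤ) (Nx:ℤ), ∑ j ∈ Icc (1:ℤ) (Ny:ℤ),
          (fun _ _ => η) i j * ((dxOp hx (u t) * dxOp hx (u t) + dyOp hy (v t) * dyOp hy (v t)) i j))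
        = ∑ i ∈ Icc (1:ℤ) (Nx:ℤ), ∑ j ∈ Icc (1:ℤ) (Ny:ℤ),
            (η * (dxOp hx (u t) i j * dxOp hx (u t) i j)
              + η * (dyOp hy (v t) i j * dyOp hy (v t) i j)) := by
      refine Finset.sum_congr rfl fun i _ => Finset.sum_congr rfl fun j _ => ?_
      simp only [Pi.add_apply, Pi.mul_apply]; ring
    have hc : (∑ i ∈ Icc (1:ℤ) (Nx:ℤ), ∑ j ∈ Icc (1:ℤ) (Ny:ℤ),
          dxOp hx (u t) i j * dxOp hx (u t) i j)
        = ∑ j ∈ Icc (1:ℤ) (Ny:ℤ), ∑ i ∈ Icc (1:ℤ) (Nx:ℤ),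
            dxOp hx (u t) i j * dxOp hx (u t) i j := Finset.sum_comm
    rw [he]
    simp only [Finset.sum_add_distrib, ← Finset.mul_sum]
    linear_combination (hx * hy * η) * hc
  -- pressure term vanishes by incompressibility
  have eP : ip2 Nx Ny hx hy (p t) (dxOp hx (u t) + dyOp hy (v t)) = 0 := by
    rw [ip2_raw]
    have he : (∑ i ∈ Icc (1:ℤ) (Nx:ℤ), ∑ j ∈ Icc (1:ℤ) (Ny:ℤ),
          p t i j * ((dxOp hx (u t) + dyOp hy (v t)) i j)) = 0 :=
      Finset.sum_eq_zero fun i hi => Finset.sum_eq_zero fun j hj => by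
        simp only [Pi.add_apply]; rw [hincomp t i hi j hj, mul_zero]
    rw [he, mul_zero]
  -- transport identity from the Cahn–Hilliard equation
  have eT : ip2 Nx Ny hx hy (μ t)
        (dxOp hx (AxOp (φ t) * u t) + dyOp hy (AyOp (φ t) * v t))
      = -(ip2 Nx Ny hx hy (μ t) (φt t))
        + ip2 Nx Ny hx hy (μ t)
          (dxOp hx ((fun a b => M (AxOp (φ t) a b)) * DxOp hx (μ t))
            + dyOp hy ((fun a b => M (AyOp (φ t) a b)) * DyOp hy (μ t))) := by
    rw [ip2_raw, ip2_raw, ip2_raw]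
    have he : (∑ i ∈ Icc (1:ℤ) (Nx:ℤ), ∑ j ∈ Icc (1:ℤ) (Ny:ℤ),
          μ t i j * ((dxOp hx (AxOp (φ t) * u t) + dyOp hy (AyOp (φ t) * v t)) i j))
        = (∑ i ∈ Icc (1:ℤ) (Nx:ℤ), ∑ j ∈ Icc (1:ℤ) (Ny:ℤ),
            (μ t i j * ((dxOp hx ((fun a b => M (AxOp (φ t) a b)) * DxOp hx (μ t))
              + dyOp hy ((fun a b => M (AyOp (φ t) a b)) * DyOp hy (μ t))) i j)
            - μ t i j * φt t i j)) := by
      refine Finset.sum_congr rfl fun i hi => Finset.sum_congr rfl fun j hj => ?_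
      have h := hCH t i hi j hj
      simp only [Pi.add_apply, Pi.mul_apply] at h ⊢
      linear_combination (μ t i j) * h
    rw [he]
    simp only [Finset.sum_sub_distrib]
    ring
  -- mobility (dissipation) identity
  have eM : ip2 Nx Ny hx hy (μ t)
        (dxOp hx ((fun a b => M (AxOp (φ t) a b)) * DxOp hx (μ t))
          + dyOp hy ((fun a b => M (AyOp (φ t) a b)) * DyOp hy (μ t)))
      = -(ipew Nx Ny hx hy (fun i j => M (AxOp (φ t) i j)) (DxOp hx (μ t) * DxOp hx (μ t))
          + ipns Nx Ny hx hy (fun i j => M (AyOp (φ t) i j)) (DyOp hy (μ t) * DyOp hy (μ t))) := by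
    rw [ip2_raw,
        ipew_rep Nx Ny hx hy (fun i j => M (AxOp (φ t) i j)) (DxOp hx (μ t) * DxOp hx (μ t))
          (fun j => by simp [Pi.mul_apply, hbDxμ0 j])
          (fun j => by simp [Pi.mul_apply, hbDxμN j]),
        ipns_rep Nx Ny hx hy (fun i j => M (AyOp (φ t) i j)) (DyOp hy (μ t) * DyOp hy (μ t))
          (fun i => by simp [Pi.mul_apply, hbDyμ0 i])
          (fun i => by simp [Pi.mul_apply, hbDyμN i])]
    have he : (∑ i ∈ Icc (1:ℤ) (Nx:ℤ), ∑ j ∈ Icc (1:ℤ) (Ny:ℤ),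
          μ t i j * ((dxOp hx ((fun a b => M (AxOp (φ t) a b)) * DxOp hx (μ t))
            + dyOp hy ((fun a b => M (AyOp (φ t) a b)) * DyOp hy (μ t))) i j))
        = (∑ i ∈ Icc (1:ℤ) (Nx:ℤ), ∑ j ∈ Icc (1:ℤ) (Ny:ℤ),
            μ t i j * dxOp hx ((fun a b => M (AxOp (φ t) a b)) * DxOp hx (μ t)) i j)
          + (∑ i ∈ Icc (1:ℤ) (Nx:ℤ), ∑ j ∈ Icc (1:ℤ) (Ny:ℤ),
            μ t i j * dyOp hy ((fun a b => M (AyOp (φ t) a b)) * DyOp hy (μ t)) i j) := by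
      rw [← Finset.sum_add_distrib]
      refine Finset.sum_congr rfl fun i _ => ?_
      rw [← Finset.sum_add_distrib]
      refine Finset.sum_congr rfl fun j _ => ?_
      simp only [Pi.add_apply]; rw [mul_add]
    have hcomm : (∑ i ∈ Icc (1:ℤ) (Nx:ℤ), ∑ j ∈ Icc (1:ℤ) (Ny:ℤ),
          μ t i j * dxOp hx ((fun a b => M (AxOp (φ t) a b)) * DxOp hx (μ t)) i j)
        = ∑ j ∈ Icc (1:ℤ) (Ny:ℤ), ∑ i ∈ Icc (1:ℤ) (Nx:ℤ),
          μ t i j * dxOp hx ((fun a b => M (AxOp (φ t) a b)) * DxOp hx (μ t)) i j :=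
      Finset.sum_comm
    have hA1 : (∑ j ∈ Icc (1:ℤ) (Ny:ℤ), ∑ i ∈ Icc (1:ℤ) (Nx:ℤ),
          μ t i j * dxOp hx ((fun a b => M (AxOp (φ t) a b)) * DxOp hx (μ t)) i j)
        = -(∑ j ∈ Icc (1:ℤ) (Ny:ℤ), ∑ i ∈ Icc (1:ℤ) ((Nx:ℤ)-1),
            (fun i j => M (AxOp (φ t) i j)) i j * ((DxOp hx (μ t) * DxOp hx (μ t)) i j)) := by
      rw [← Finset.sum_neg_distrib]
      refine Finset.sum_congr rfl fun j _ => ?_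
      have hsd := sbp_div Nx hx
        (fun i => M (AxOp (φ t) i j) * DxOp hx (μ t) i j) (fun i => μ t i j)
        (by rw [hbDxμ0 j, mul_zero]) (by rw [hbDxμN j, mul_zero])
      refine Eq.trans hsd ?_
      rw [neg_inj]
      refine Finset.sum_congr rfl fun i _ => ?_
      simp only [Pi.mul_apply, DxOp]
      ring
    have hA2 : (∑ i ∈ Icc (1:ℤ) (Nx:ℤ), ∑ j ∈ Icc (1:ℤ) (Ny:ℤ),
          μ t i j * dyOp hy ((fun a b => M (AyOp (φ t) a b)) * DyOp hy (μ t)) i j)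
        = -(∑ i ∈ Icc (1:ℤ) (Nx:ℤ), ∑ j ∈ Icc (1:ℤ) ((Ny:ℤ)-1),
            (fun i j => M (AyOp (φ t) i j)) i j * ((DyOp hy (μ t) * DyOp hy (μ t)) i j)) := by
      rw [← Finset.sum_neg_distrib]
      refine Finset.sum_congr rfl fun i _ => ?_
      have hsd := sbp_div Ny hy
        (fun j => M (AyOp (φ t) i j) * DyOp hy (μ t) i j) (fun j => μ t i j)
        (by rw [hbDyμ0 i, mul_zero]) (by rw [hbDyμN i, mul_zero])
      refine Eq.trans hsd ?_
      rw [neg_inj]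
      refine Finset.sum_congr rfl fun j _ => ?_
      simp only [Pi.mul_apply, DyOp]
      ring
    linear_combination (hx * hy) * he + (hx * hy) * hcomm + (hx * hy) * hA1 + (hx * hy) * hA2
  -- pairing of μ with φt via the chemical potential definition
  have eLx : hx * hy * (∑ i ∈ Icc (1:ℤ) (Nx:ℤ), ∑ j ∈ Icc (1:ℤ) (Ny:ℤ),
        dxOp hx (DxOp hx (φ t)) i j * φt t i j)
      = -(ipew Nx Ny hx hy (DxOp hx (φ t)) (DxOp hx (φt t))) := by
    rw [ipew_rep Nx Ny hx hy (DxOp hx (φ t)) (DxOp hx (φt t)) (fun j => by rw [hbDxφ0 j, zero_mul]) (fun j => by rw [hbDxφN j, zero_mul]),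
        ← mul_neg, ← Finset.sum_neg_distrib, Finset.sum_comm]
    congr 1
    refine Finset.sum_congr rfl fun j _ => ?_
    exact lap1d Nx hx (fun i => DxOp hx (φ t) i j) (fun i => φt t i j) (hbDxφ0 j) (hbDxφN j)
  have eLy : hx * hy * (∑ i ∈ Icc (1:ℤ) (Nx:ℤ), ∑ j ∈ Icc (1:ℤ) (Ny:ℤ),
        dyOp hy (DyOp hy (φ t)) i j * φt t i j)
      = -(ipns Nx Ny hx hy (DyOp hy (φ t)) (DyOp hy (φt t))) := by
    rw [ipns_rep Nx Ny hx hy (DyOp hy (φ t)) (DyOp hy (φt t)) (fun i => by rw [hbDyφ0 i, zero_mul]) (fun i => by rw [hbDyφN i, zero_mul]),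
        ← mul_neg, ← Finset.sum_neg_distrib]
    congr 1
    refine Finset.sum_congr rfl fun i _ => ?_
    exact lap1d Ny hy (fun j => DyOp hy (φ t) i j) (fun j => φt t i j) (hbDyφ0 i) (hbDyφN i)
  have eL : ip2 Nx Ny hx hy (μ t) (φt t)
      = γ * ε * (ipew Nx Ny hx hy (DxOp hx (φ t)) (DxOp hx (φt t))
          + ipns Nx Ny hx hy (DyOp hy (φ t)) (DyOp hy (φt t)))
        + (γ / ε) * ip2 Nx Ny hx hy (fun i j => fd (φ t i j) * φt t i j) 1 := by
    rw [ip2_raw, ip2_one]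
    have he : (∑ i ∈ Icc (1:ℤ) (Nx:ℤ), ∑ j ∈ Icc (1:ℤ) (Ny:ℤ), μ t i j * φt t i j)
        = ∑ i ∈ Icc (1:ℤ) (Nx:ℤ), ∑ j ∈ Icc (1:ℤ) (Ny:ℤ),
            ((-(γ*ε))*(dxOp hx (DxOp hx (φ t)) i j * φt t i j)
            + ((-(γ*ε))*(dyOp hy (DyOp hy (φ t)) i j * φt t i j)
            + (γ/ε)*(fd (φ t i j) * φt t i j))) := by
      refine Finset.sum_congr rfl fun i hi => Finset.sum_congr rfl fun j hj => ?_
      have h := hμdef t i hi j hj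
      linear_combination (φt t i j) * h
    rw [he]
    simp only [Finset.sum_add_distrib, ← Finset.mul_sum]
    linear_combination (-(γ*ε)) * eLx + (-(γ*ε)) * eLy
  -- the time derivative of the discrete energy
  have hDxφt : ∀ i j, HasDerivAt (fun s => DxOp hx (φ s) i j) (DxOp hx (φt t) i j) t := by
    intro i j
    have := ((hφt t (i+1) j).sub (hφt t i j)).div_const hx
    simpa [DxOp] using this
  have hDyφt : ∀ i j, HasDerivAt (fun s => DyOp hy (φ s) i j) (DyOp hy (φt t) i j) t := by
    intro i j
    have := ((hφt t i (j+1)).sub (hφt t i j)).div_const hy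
    simpa [DyOp] using this
  have hEf : HasDerivAt (fun s => ip2 Nx Ny hx hy (fun i j => fW (φ s i j)) 1)
      (ip2 Nx Ny hx hy (fun i j => fd (φ t i j) * φt t i j) 1) t := by
    have h1 : (fun s => ip2 Nx Ny hx hy (fun i j => fW (φ s i j)) 1)
        = fun s => hx * hy * ∑ i ∈ Icc (1:ℤ) (Nx:ℤ), ∑ j ∈ Icc (1:ℤ) (Ny:ℤ), fW (φ s i j) := by
      funext s; exact ip2_one Nx Ny hx hy _
    rw [h1, ip2_one]
    exact HasDerivAt.const_mul _ (HasDerivAt.fun_sum fun i _ => HasDerivAt.fun_sum fun j _ =>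
      (hf (φ t i j)).comp t (hφt t i j))
  have hE : HasDerivAt
      (fun s =>
        (1 / 2) * (ipew Nx Ny hx hy (u s) (u s) + ipns Nx Ny hx hy (v s) (v s))
          + (γ * ε / 2) * (ipew Nx Ny hx hy (DxOp hx (φ s)) (DxOp hx (φ s))
              + ipns Nx Ny hx hy (DyOp hy (φ s)) (DyOp hy (φ s)))
          + (γ / ε) * ip2 Nx Ny hx hy (fun i j => fW (φ s i j)) 1)
      ((1/2) * (2 * ipew Nx Ny hx hy (ut t) (u t) + 2 * ipns Nx Ny hx hy (vt t) (v t))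
        + (γ * ε / 2) * (2 * ipew Nx Ny hx hy (DxOp hx (φt t)) (DxOp hx (φ t))
            + 2 * ipns Nx Ny hx hy (DyOp hy (φt t)) (DyOp hy (φ t)))
        + (γ / ε) * ip2 Nx Ny hx hy (fun i j => fd (φ t i j) * φt t i j) 1) t := by
    exact ((((hasDerivAt_ipew_sq Nx Ny hx hy t u (ut t) (hut t)).add
        (hasDerivAt_ipns_sq Nx Ny hx hy t v (vt t) (hvt t))).const_mul (1/2)).add
      (((hasDerivAt_ipew_sq Nx Ny hx hy t (fun s => DxOp hx (φ s)) (DxOp hx (φt t)) hDxφt).add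
        (hasDerivAt_ipns_sq Nx Ny hx hy t (fun s => DyOp hy (φ s)) (DyOp hy (φt t)) hDyφt)).const_mul
          (γ * ε / 2))).add (hEf.const_mul (γ / ε))
  -- assembling the energy law
  have hA : ipew Nx Ny hx hy (ut t) (u t)
      = - ipew Nx Ny hx hy (DxOp hx (p t)) (u t)
        + η * ipew Nx Ny hx hy (DxOp hx (dxOp hx (u t))) (u t)
        - ipew Nx Ny hx hy (AxOp (φ t) * DxOp hx (μ t)) (u t) := by
    rw [e1, hid1 t, hid2 t]; ring
  have hB : ipns Nx Ny hx hy (vt t) (v t)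
      = - ipns Nx Ny hx hy (DyOp hy (p t)) (v t)
        + η * ipns Nx Ny hx hy (DyOp hy (dyOp hy (v t))) (v t)
        - ipns Nx Ny hx hy (AyOp (φ t) * DyOp hy (μ t)) (v t) := by
    rw [e2, hid3 t, hid4 t]; ring
  have hP : ipew Nx Ny hx hy (DxOp hx (p t)) (u t)
      + ipns Nx Ny hx hy (DyOp hy (p t)) (v t) = 0 := by
    rw [hid5 t, eP]; ring
  have hQ : ipew Nx Ny hx hy (AxOp (φ t) * DxOp hx (μ t)) (u t)
      + ipns Nx Ny hx hy (AyOp (φ t) * DyOp hy (μ t)) (v t)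
      = γ * ε * (ipew Nx Ny hx hy (DxOp hx (φ t)) (DxOp hx (φt t))
          + ipns Nx Ny hx hy (DyOp hy (φ t)) (DyOp hy (φt t)))
        + (γ / ε) * ip2 Nx Ny hx hy (fun i j => fd (φ t i j) * φt t i j) 1
        + (ipew Nx Ny hx hy (fun i j => M (AxOp (φ t) i j)) (DxOp hx (μ t) * DxOp hx (μ t))
          + ipns Nx Ny hx hy (fun i j => M (AyOp (φ t) i j)) (DyOp hy (μ t) * DyOp hy (μ t))) := by
    rw [hid6 t, eT, eM, eL]; ring
  have hCc : ipew Nx Ny hx hy (DxOp hx (φt t)) (DxOp hx (φ t))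
      = ipew Nx Ny hx hy (DxOp hx (φ t)) (DxOp hx (φt t)) := ipew_comm _ _ _ _ _ _
  have hDc : ipns Nx Ny hx hy (DyOp hy (φt t)) (DyOp hy (φ t))
      = ipns Nx Ny hx hy (DyOp hy (φ t)) (DyOp hy (φt t)) := ipns_comm _ _ _ _ _ _
  have key : ((1/2) * (2 * ipew Nx Ny hx hy (ut t) (u t) + 2 * ipns Nx Ny hx hy (vt t) (v t))
        + (γ * ε / 2) * (2 * ipew Nx Ny hx hy (DxOp hx (φt t)) (DxOp hx (φ t))
            + 2 * ipns Nx Ny hx hy (DyOp hy (φt t)) (DyOp hy (φ t)))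
        + (γ / ε) * ip2 Nx Ny hx hy (fun i j => fd (φ t i j) * φt t i j) 1)
      = -(ip2 Nx Ny hx hy (fun _ _ => η)
            (dxOp hx (u t) * dxOp hx (u t) + dyOp hy (v t) * dyOp hy (v t))
          + ipew Nx Ny hx hy (fun i j => M (AxOp (φ t) i j))
              (DxOp hx (μ t) * DxOp hx (μ t))
          + ipns Nx Ny hx hy (fun i j => M (AyOp (φ t) i j))
              (DyOp hy (μ t) * DyOp hy (μ t))) := by
    linear_combination hA + hB - hP + η * e3x + η * e3y - hQ
      + (γ * ε) * hCc + (γ * ε) * hDc + eV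
  rw [key] at hE
  exact hE
end
end
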